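/- arXiv:2205.04246 — 6 statements merged into one kernel-verified Lean document; each statement's English description precedes it below -/
import Mathlib

section
/- Let I and J be open intervals in ℝ, and let f : I → ℝ and g : J → ℝ be twice continuously differentiable functions such that f'(x)·g'(y) > 0 and f(x) + g(y) ≠ 0 for all (x,y) ∈ I × J. Then the function u(x,y) = ln( 2 f'(x) g'(y) / (f(x) + g(y))² ) satisfies Liouville's hyperbolic equation ∂²u/∂x∂y = e^{u} at every point of I × J. -/
/-- Liouville's formula `u(x,y) = ln(2 f'(x) g'(y) / (f(x)+g(y))²)` solves the
hyperbolic Liouville equation `u_{xy} = e^u` on a product of open intervals. -/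
theorem liouville_hyperbolic_solution
    (I J : Set ℝ) (hI : IsOpen I) (hJ : IsOpen J)
    (hIint : I.OrdConnected) (hJint : J.OrdConnected)
    (f g : ℝ → ℝ)
    (hf : ContDiffOn ℝ 2 f I) (hg : ContDiffOn ℝ 2 g J)
    (hpos : ∀ x ∈ I, ∀ y ∈ J, 0 < deriv f x * deriv g y)
    (hne : ∀ x ∈ I, ∀ y ∈ J, f x + g y ≠ 0)
    (u : ℝ → ℝ → ℝ)
    (hu : ∀ x y, u x y =
      Real.log (2 * deriv f x * deriv g y / (f x + g y) ^ 2)) :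
    ∀ x ∈ I, ∀ y ∈ J,
      deriv (fun x' => deriv (fun y' => u x' y') y) x = Real.exp (u x y) := by
  intro x hx y hy
  have hfd : DifferentiableOn ℝ f I := hf.differentiableOn two_ne_zero
  have hgd : DifferentiableOn ℝ g J := hg.differentiableOn two_ne_zero
  have hg1 : ContDiffOn ℝ 1 (deriv g) J := hg.deriv_of_isOpen hJ (by norm_num)
  have hgy : HasDerivAt g (deriv g y) y :=
    (hgd.differentiableAt (hJ.mem_nhds hy)).hasDerivAt
  have hg'y : HasDerivAt (deriv g) (deriv (deriv g) y) y :=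
    ((hg1.differentiableOn one_ne_zero).differentiableAt (hJ.mem_nhds hy)).hasDerivAt
  have hg'ne : deriv g y ≠ 0 := by
    intro h
    have := hpos x hx y hy
    rw [h, mul_zero] at this
    exact lt_irrefl 0 this
  have key : ∀ x' ∈ I, deriv (fun y' => u x' y') y
      = deriv (deriv g) y / deriv g y - 2 * deriv g y / (f x' + g y) := by
    intro x' hx'
    have hprod := hpos x' hx' y hy
    have hf'ne : deriv f x' ≠ 0 := by
      intro h
      rw [h, zero_mul] at hprod
      exact lt_irrefl 0 hprod
    have hne' : f x' + g y ≠ 0 := hne x' hx' y hy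
    have hev : (fun y' => u x' y') =ᶠ[nhds y]
        fun y' => Real.log (2 * deriv f x' * deriv g y')
          - Real.log ((f x' + g y') ^ 2) := by
      have h1 : ∀ᶠ y' in nhds y, deriv g y' ≠ 0 :=
        hg'y.continuousAt.eventually_ne hg'ne
      have h2 : ∀ᶠ y' in nhds y, f x' + g y' ≠ 0 :=
        (continuousAt_const.add hgy.continuousAt).eventually_ne hne'
      filter_upwards [h1, h2] with y' h1' h2'
      rw [hu, Real.log_div (mul_ne_zero (mul_ne_zero two_ne_zero hf'ne) h1')
        (pow_ne_zero _ h2')]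
    rw [hev.deriv_eq]
    have hN : HasDerivAt (fun y' => 2 * deriv f x' * deriv g y')
        (2 * deriv f x' * deriv (deriv g) y) y := hg'y.const_mul _
    have hB : HasDerivAt (fun y' => f x' + g y') (deriv g y) y := hgy.const_add _
    have hD : HasDerivAt (fun y' => (f x' + g y') ^ 2)
        ((2 : ℕ) * (f x' + g y) ^ 1 * deriv g y) y := hB.pow 2
    have hder := (hN.log (mul_ne_zero (mul_ne_zero two_ne_zero hf'ne) hg'ne)).sub
      (hD.log (pow_ne_zero _ hne'))
    rw [HasDerivAt.deriv (f := fun y' => Real.log (2 * deriv f x' * deriv g y') - Real.log ((f x' + g y') ^ 2)) hder]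
    field_simp
    ring
  have hxev : (fun x' => deriv (fun y' => u x' y') y) =ᶠ[nhds x]
      fun x' => deriv (deriv g) y / deriv g y - 2 * deriv g y / (f x' + g y) := by
    filter_upwards [hI.mem_nhds hx] with x' hx' using key x' hx'
  rw [hxev.deriv_eq]
  have hfx : HasDerivAt f (deriv f x) x :=
    (hfd.differentiableAt (hI.mem_nhds hx)).hasDerivAt
  have hne' : f x + g y ≠ 0 := hne x hx y hy
  have hB : HasDerivAt (fun x' => f x' + g y) (deriv f x) x := hfx.add_const _
  have hinv : HasDerivAt (fun x' => (f x' + g y)⁻¹)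
      (-(deriv f x) / (f x + g y) ^ 2) x := hB.inv hne'
  have hmain : HasDerivAt
      (fun x' => deriv (deriv g) y / deriv g y - 2 * deriv g y / (f x' + g y))
      (2 * deriv f x * deriv g y / (f x + g y) ^ 2) x := by
    have h1 : HasDerivAt (fun x' => 2 * deriv g y / (f x' + g y))
        (2 * deriv g y * (-(deriv f x) / (f x + g y) ^ 2)) x := by
      simpa [div_eq_mul_inv] using hinv.const_mul (2 * deriv g y)
    have h2 : HasDerivAt (fun x' => deriv (deriv g) y / deriv g y - 2 * deriv g y / (f x' + g y)) _ x := (hasDerivAt_const x (deriv (deriv g) y / deriv g y)).sub h1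
    convert h2 using 1
    ring
  rw [hmain.deriv, hu]
  have hposq : 0 < 2 * deriv f x * deriv g y / (f x + g y) ^ 2 := by
    apply div_pos
    · have := hpos x hx y hy; nlinarith
    · exact pow_two_pos_of_ne_zero hne'
  rw [Real.exp_log hposq]
end

section
/- Let K and a be nonzero real constants, let I and J be open intervals in ℝ, and let f : I → ℝ and g : J → ℝ be twice continuously differentiable functions such that 2 f'(x) g'(y) / (a K) > 0 and f(x) + g(y) ≠ 0 for all (x,y) ∈ I × J. Then the function u(x,y) = (1/a) · ln( 2 f'(x) g'(y) / ( a K (f(x) + g(y))² ) ) satisfies the equation ∂²u/∂x∂y = K e^{a u} at every point of I × J. -/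
/-- Liouville's formula for the hyperbolic equation with parameters:
`u(x,y) = (1/a) ln( 2 f'(x) g'(y) / (aK (f(x)+g(y))²) )` solves `u_{xy} = K e^{au}`. -/
theorem liouville_hyperbolic_solution_param
    (K a : ℝ) (hK : K ≠ 0) (ha : a ≠ 0)
    (I J : Set ℝ) (hI : IsOpen I) (hJ : IsOpen J)
    (hIint : I.OrdConnected) (hJint : J.OrdConnected)
    (f g : ℝ → ℝ)
    (hf : ContDiffOn ℝ 2 f I) (hg : ContDiffOn ℝ 2 g J)
    (hpos : ∀ x ∈ I, ∀ y ∈ J, 0 < 2 * deriv f x * deriv g y / (a * K))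
    (hne : ∀ x ∈ I, ∀ y ∈ J, f x + g y ≠ 0)
    (u : ℝ → ℝ → ℝ)
    (hu : ∀ x y, u x y =
      (1 / a) * Real.log (2 * deriv f x * deriv g y / (a * K * (f x + g y) ^ 2))) :
    ∀ x ∈ I, ∀ y ∈ J,
      deriv (fun x' => deriv (fun y' => u x' y') y) x = K * Real.exp (a * u x y) := by
  intro x hx y hy
  have haK : a * K ≠ 0 := mul_ne_zero ha hK
  -- nonvanishing of derivatives
  have hfd : ∀ x' ∈ I, deriv f x' ≠ 0 := by
    intro x' hx'
    have h := hpos x' hx' y hy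
    have : 2 * deriv f x' * deriv g y ≠ 0 := by
      intro h0; rw [h0] at h; simp at h
    intro h0; apply this; rw [h0]; ring
  have hgd : ∀ y' ∈ J, deriv g y' ≠ 0 := by
    intro y' hy'
    have h := hpos x hx y' hy'
    have : 2 * deriv f x * deriv g y' ≠ 0 := by
      intro h0; rw [h0] at h; simp at h
    intro h0; apply this; rw [h0]; ring
  -- differentiability facts
  have hg1 : HasDerivAt g (deriv g y) y :=
    ((hg.differentiableOn (by norm_num)).differentiableAt
      (hJ.mem_nhds hy)).hasDerivAt
  have hgC1 : ContDiffOn ℝ 1 (deriv g) J := hg.deriv_of_isOpen hJ (by norm_num)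
  have hg2 : HasDerivAt (deriv g) (deriv (deriv g) y) y :=
    ((hgC1.differentiableOn (by norm_num)).differentiableAt (hJ.mem_nhds hy)).hasDerivAt
  set g1 := deriv g y
  set g2 := deriv (deriv g) y
  have hg1ne : g1 ≠ 0 := hgd y hy
  -- Step 1: formula for the inner derivative at every x' ∈ I
  have inner : ∀ x' ∈ I,
      deriv (fun y' => u x' y') y
        = (1 / a) * (g2 / g1) - (2 / a) * g1 / (f x' + g y) := by
    intro x' hx'
    have hc : deriv f x' ≠ 0 := hfd x' hx'
    have hs : f x' + g y ≠ 0 := hne x' hx' y hy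
    set c := deriv f x'
    set s := f x' + g y with hs_def
    have hrep : (fun y' => u x' y')
        = fun y' => (1 / a) * Real.log (2 * c * deriv g y' / (a * K * (f x' + g y') ^ 2)) :=
      funext (hu x')
    have hnum : HasDerivAt (fun y' => 2 * c * deriv g y') (2 * c * g2) y :=
      hg2.const_mul (2 * c)
    have hden : HasDerivAt (fun y' => a * K * (f x' + g y') ^ 2)
        (a * K * ((2 : ℕ) * (f x' + g y) ^ (2 - 1) * g1)) y :=
      ((hg1.const_add (f x')).pow 2).const_mul (a * K)
    have hdenne : a * K * (f x' + g y) ^ 2 ≠ 0 :=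
      mul_ne_zero haK (pow_ne_zero 2 hs)
    have hF : HasDerivAt (fun y' => 2 * c * deriv g y' / (a * K * (f x' + g y') ^ 2))
        ((2 * c * g2 * (a * K * (f x' + g y) ^ 2)
          - 2 * c * g1 * (a * K * ((2 : ℕ) * (f x' + g y) ^ (2 - 1) * g1)))
          / (a * K * (f x' + g y) ^ 2) ^ 2) y := hnum.div hden hdenne
    have hFne : 2 * c * g1 / (a * K * (f x' + g y) ^ 2) ≠ 0 := by
      apply div_ne_zero _ hdenne
      intro h0
      exact hc (by
        rcases mul_eq_zero.1 h0 with h | h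
        · rcases mul_eq_zero.1 h with h | h
          · norm_num at h
          · exact h
        · exact absurd h hg1ne)
    have hL := (hF.log hFne).const_mul (1 / a)
    rw [hrep]
    rw [hL.deriv]
    rw [hs_def]
    rw [show deriv g y = g1 from rfl]
    have hs' : f x' + g y ≠ 0 := hs
    field_simp
    ring
  -- Step 2: outer derivative
  have hEq : (fun x' => deriv (fun y' => u x' y') y)
      =ᶠ[nhds x] fun x' => (1 / a) * (g2 / g1) - (2 / a) * g1 / (f x' + g y) := by
    filter_upwards [hI.mem_nhds hx] with x' hx' using inner x' hx'
  have hf1 : HasDerivAt f (deriv f x) x :=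
    ((hf.differentiableOn (by norm_num)).differentiableAt (hI.mem_nhds hx)).hasDerivAt
  set f1 := deriv f x
  have hf1ne : f1 ≠ 0 := hfd x hx
  have hsne : f x + g y ≠ 0 := hne x hx y hy
  have houter : HasDerivAt (fun x' => (1 / a) * (g2 / g1) - (2 / a) * g1 / (f x' + g y))
      (0 - ((2 / a) * g1 * (-(f1 / (f x + g y) ^ 2)))) x := by
    have h1 : HasDerivAt (fun x' => f x' + g y) f1 x := hf1.add_const (g y)
    have h2 : HasDerivAt (fun x' => (f x' + g y)⁻¹) (-(f1 / (f x + g y) ^ 2)) x := by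
      have := h1.inv hsne
      rw [neg_div] at this
      exact this
    have h3 : HasDerivAt (fun x' => (2 / a) * g1 * (f x' + g y)⁻¹)
        ((2 / a) * g1 * (-(f1 / (f x + g y) ^ 2))) x := h2.const_mul ((2 / a) * g1)
    have h4 := (hasDerivAt_const x ((1 / a) * (g2 / g1))).sub h3
    exact h4.congr_of_eventuallyEq (Filter.Eventually.of_forall fun x' => by
      simp only [Pi.sub_apply]
      ring)
  rw [hEq.deriv_eq, houter.deriv]
  -- Step 3: the right-hand side
  have htpos : 0 < 2 * f1 * g1 / (a * K * (f x + g y) ^ 2) := by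
    have h1 := hpos x hx y hy
    have h2 : (0:ℝ) < (f x + g y) ^ 2 := by positivity
    have : 2 * f1 * g1 / (a * K * (f x + g y) ^ 2)
        = (2 * f1 * g1 / (a * K)) / (f x + g y) ^ 2 := by
      field_simp
    rw [this]
    exact div_pos h1 h2
  rw [hu x y]
  have : a * (1 / a * Real.log (2 * f1 * g1 / (a * K * (f x + g y) ^ 2)))
      = Real.log (2 * f1 * g1 / (a * K * (f x + g y) ^ 2)) := by
    field_simp
  rw [this, Real.exp_log htpos]
  field_simp
  ring
end

section
/- Let Ω ⊆ ℂ be open and let F : Ω → ℂ be holomorphic with F'(z) ≠ 0 for all z ∈ Ω. Then the function u(z) = ln( 4 |F'(z)|² / (1 + |F(z)|²)² ) satisfies the elliptic Liouville equation Δu = −2 e^{u} on Ω, where Δ is the Laplacian on ℝ² identified with ℂ. -/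
open Complex ContinuousLinearMap
noncomputable def Mre (a : ℂ) : ℂ →L[ℝ] ℝ :=
  Complex.reCLM.comp (a • (ContinuousLinearMap.id ℝ ℂ))

@[simp] lemma Mre_apply (a v : ℂ) : Mre a v = (a * v).re := by
  simp [Mre, smul_eq_mul]

lemma hasFDerivAt_of_hasDerivAt {f : ℂ → ℂ} {d w : ℂ} (hd : HasDerivAt f d w) :
    HasFDerivAt f (d • (ContinuousLinearMap.id ℝ ℂ)) w := by
  have h := hd.hasFDerivAt.restrictScalars ℝ
  refine h.congr_fderiv ?_
  ext v
  simp [smul_eq_mul, mul_comm]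

lemma hasFDerivAt_normSq_comp {f : ℂ → ℂ} {w : ℂ} (hf : DifferentiableAt ℂ f w) (c : ℝ) :
    HasFDerivAt (fun x => c + Complex.normSq (f x))
      ((2:ℝ) • Mre ((starRingEnd ℂ) (f w) * deriv f w)) w := by
  have hd : HasFDerivAt f (deriv f w • (ContinuousLinearMap.id ℝ ℂ)) w :=
    hasFDerivAt_of_hasDerivAt hf.hasDerivAt
  have hre : HasFDerivAt (fun x => (f x).re)
      (Complex.reCLM.comp (deriv f w • (ContinuousLinearMap.id ℝ ℂ))) w :=
    (Complex.reCLM.hasFDerivAt).comp w hd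
  have him : HasFDerivAt (fun x => (f x).im)
      (Complex.imCLM.comp (deriv f w • (ContinuousLinearMap.id ℝ ℂ))) w :=
    (Complex.imCLM.hasFDerivAt).comp w hd
  have h := ((hre.mul hre).add (him.mul him)).const_add c
  have hfun : (fun x => c + ((f x).re * (f x).re + (f x).im * (f x).im))
      = fun x => c + Complex.normSq (f x) := by
    funext x; rw [Complex.normSq_apply]
  simp only [Pi.add_apply, Pi.mul_apply] at h
  rw [hfun] at h
  refine h.congr_fderiv ?_
  ext v
  simp [Mre, smul_eq_mul, Complex.mul_re]
  ring

lemma hasFDerivAt_log_normSq {f : ℂ → ℂ} {w : ℂ} (hf : DifferentiableAt ℂ f w) {c : ℝ}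
    (hpos : 0 < c + Complex.normSq (f w)) :
    HasFDerivAt (fun x => Real.log (c + Complex.normSq (f x)))
      ((c + Complex.normSq (f w))⁻¹ • ((2:ℝ) • Mre ((starRingEnd ℂ) (f w) * deriv f w))) w :=
  (hasFDerivAt_normSq_comp hf c).log hpos.ne'

lemma fderiv_log_normSq_apply {f : ℂ → ℂ} {w : ℂ} (hf : DifferentiableAt ℂ f w) {c : ℝ}
    (hpos : 0 < c + Complex.normSq (f w)) (v : ℂ) :
    fderiv ℝ (fun x => Real.log (c + Complex.normSq (f x))) w v
      = (c + Complex.normSq (f w))⁻¹ * (2 * (((starRingEnd ℂ) (f w) * deriv f w) * v).re) := by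
  rw [(hasFDerivAt_log_normSq hf hpos).fderiv]
  simp [smul_eq_mul, mul_assoc]

lemma lap_log_normSq {f : ℂ → ℂ} {s : Set ℂ} (hs : IsOpen s) (hf : AnalyticOnNhd ℂ f s)
    {z : ℂ} (hz : z ∈ s) {c : ℝ} (hpos : ∀ w ∈ s, 0 < c + Complex.normSq (f w)) :
    ∃ L1 LI : ℂ →L[ℝ] ℝ,
      HasFDerivAt (fun w => fderiv ℝ (fun x => Real.log (c + Complex.normSq (f x))) w 1) L1 z ∧
      HasFDerivAt (fun w => fderiv ℝ (fun x => Real.log (c + Complex.normSq (f x))) w Complex.I)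
        LI z ∧
      L1 1 + LI Complex.I
        = 4 * c * Complex.normSq (deriv f z) / (c + Complex.normSq (f z)) ^ 2 := by
  have hdf : AnalyticOnNhd ℂ (deriv f) s := hf.deriv_of_isOpen hs
  have hfz : DifferentiableAt ℂ f z := (hf z hz).differentiableAt
  have hdz : DifferentiableAt ℂ (deriv f) z := (hdf z hz).differentiableAt
  have hgz : 0 < c + Complex.normSq (f z) := hpos z hz
  have key : ∀ v : ℂ, ∃ L : ℂ →L[ℝ] ℝ,
      HasFDerivAt (fun w => fderiv ℝ (fun x => Real.log (c + Complex.normSq (f x))) w v) L z ∧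
      L v = (c + Complex.normSq (f z))⁻¹
              * (2 * ((((starRingEnd ℂ) (f z)) * (deriv (deriv f) z * v)
                  + deriv f z * (starRingEnd ℂ) (deriv f z * v)) * v).re)
            + (2 * (((starRingEnd ℂ) (f z) * deriv f z) * v).re)
              * (-((c + Complex.normSq (f z)) ^ 2)⁻¹
                  * (2 * (((starRingEnd ℂ) (f z) * deriv f z) * v).re)) := by
    intro v
    have hDf : HasFDerivAt f (deriv f z • (ContinuousLinearMap.id ℝ ℂ)) z :=
      hasFDerivAt_of_hasDerivAt hfz.hasDerivAt
    have hconj : HasFDerivAt (fun w => (starRingEnd ℂ) (f w))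
        ((((starL' ℝ : ℂ ≃L[ℝ] ℂ) : ℂ →L[ℝ] ℂ)).comp
          (deriv f z • (ContinuousLinearMap.id ℝ ℂ))) z := hDf.star
    have hDd : HasFDerivAt (deriv f) (deriv (deriv f) z • (ContinuousLinearMap.id ℝ ℂ)) z :=
      hasFDerivAt_of_hasDerivAt hdz.hasDerivAt
    have hG := hconj.mul hDd
    have hGv := hG.mul_const v
    have hre := (Complex.reCLM.hasFDerivAt).comp z hGv
    have hB := hre.const_mul (2:ℝ)
    have hA : HasFDerivAt (fun w => (c + Complex.normSq (f w))⁻¹)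
        ((-((c + Complex.normSq (f z)) ^ 2)⁻¹)
          • ((2:ℝ) • Mre ((starRingEnd ℂ) (f z) * deriv f z))) z :=
      (hasDerivAt_inv hgz.ne').comp_hasFDerivAt z (hasFDerivAt_normSq_comp hfz c)
    have hφ := hA.mul hB
    refine ⟨_, HasFDerivAt.congr_of_eventuallyEq hφ ?_, ?_⟩
    · filter_upwards [hs.mem_nhds hz] with w hw
      rw [fderiv_log_normSq_apply ((hf w hw).differentiableAt) (hpos w hw) v]
      rfl
    · simp [smul_eq_mul, smul_smul]
      ring
  obtain ⟨L1, h1, hv1⟩ := key 1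
  obtain ⟨LI, hI, hvI⟩ := key Complex.I
  refine ⟨L1, LI, h1, hI, ?_⟩
  rw [hv1, hvI]
  have hne : c + Complex.normSq (f z) ≠ 0 := hgz.ne'
  field_simp
  simp [Complex.normSq_apply, Complex.mul_re, Complex.mul_im, Complex.add_re, Complex.add_im]
  ring

/-- Liouville's formula in the elliptic setting: if `F` is holomorphic with
nonvanishing derivative on an open set `Ω ⊆ ℂ`, then
`u = ln( 4|F'|² / (1+|F|²)² )` satisfies `Δu = -2 e^u` on `Ω`,
where the Laplacian is the sum of the second directional derivatives in the
directions `1` and `I` of `ℂ ≅ ℝ²`. -/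
theorem liouville_elliptic_solution_neg
    (Ω : Set ℂ) (hΩ : IsOpen Ω)
    (F : ℂ → ℂ) (hF : DifferentiableOn ℂ F Ω)
    (hF' : ∀ z ∈ Ω, deriv F z ≠ 0)
    (u : ℂ → ℝ)
    (hu : ∀ z, u z =
      Real.log (4 * ‖deriv F z‖ ^ 2 / (1 + ‖F z‖ ^ 2) ^ 2)) :
    ∀ z ∈ Ω,
      fderiv ℝ (fun w => fderiv ℝ u w 1) z 1
        + fderiv ℝ (fun w => fderiv ℝ u w Complex.I) z Complex.I
      = -2 * Real.exp (u z) := by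
  intro z hz
  have hAN : AnalyticOnNhd ℂ F Ω := hF.analyticOnNhd hΩ
  have hAN' : AnalyticOnNhd ℂ (deriv F) Ω := hAN.deriv_of_isOpen hΩ
  have hpos1 : ∀ w ∈ Ω, 0 < (0:ℝ) + Complex.normSq (deriv F w) := fun w hw => by
    simpa using Complex.normSq_pos.2 (hF' w hw)
  have hpos2 : ∀ w ∈ Ω, 0 < (1:ℝ) + Complex.normSq (F w) := fun w hw => by
    have := Complex.normSq_nonneg (F w); linarith
  obtain ⟨L1a, LIa, h1a, hIa, hsa⟩ := lap_log_normSq hΩ hAN' hz hpos1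
  obtain ⟨L1b, LIb, h1b, hIb, hsb⟩ := lap_log_normSq hΩ hAN hz hpos2
  have hU : ∀ w ∈ Ω, u w
      = Real.log ((0:ℝ) + Complex.normSq (deriv F w))
        + (-2) * Real.log ((1:ℝ) + Complex.normSq (F w)) + Real.log 4 := by
    intro w hw
    have h1 : (0:ℝ) < Complex.normSq (deriv F w) := Complex.normSq_pos.2 (hF' w hw)
    have h2 : (0:ℝ) < 1 + Complex.normSq (F w) := by
      have := Complex.normSq_nonneg (F w); linarith
    rw [hu w, Complex.sq_norm, Complex.sq_norm,
      Real.log_div (by positivity) (by positivity),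
      Real.log_mul (by norm_num) h1.ne', Real.log_pow, zero_add]
    push_cast
    ring
  have hfd : ∀ᶠ w in nhds z, ∀ v : ℂ, fderiv ℝ u w v
      = fderiv ℝ (fun x => Real.log ((0:ℝ) + Complex.normSq (deriv F x))) w v
        + (-2) * fderiv ℝ (fun x => Real.log ((1:ℝ) + Complex.normSq (F x))) w v := by
    filter_upwards [hΩ.mem_nhds hz] with w hw
    intro v
    have hTa := hasFDerivAt_log_normSq ((hAN' w hw).differentiableAt) (hpos1 w hw)
    have hTb := hasFDerivAt_log_normSq ((hAN w hw).differentiableAt) (hpos2 w hw)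
    have hev : u =ᶠ[nhds w] fun x => Real.log ((0:ℝ) + Complex.normSq (deriv F x))
        + (-2) * Real.log ((1:ℝ) + Complex.normSq (F x)) + Real.log 4 := by
      filter_upwards [hΩ.mem_nhds hw] with x hx using hU x hx
    have hsum := ((hTa.add (hTb.const_mul (-2:ℝ))).add_const (Real.log 4)).congr_of_eventuallyEq
      hev
    rw [hsum.fderiv, hTa.fderiv, hTb.fderiv]
    simp [smul_eq_mul]
  have e1 : fderiv ℝ (fun w => fderiv ℝ u w 1) z 1 = L1a 1 + (-2) * (L1b 1) := by
    have hv : (fun w => fderiv ℝ u w 1) =ᶠ[nhds z]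
        (fun w => fderiv ℝ (fun x => Real.log ((0:ℝ) + Complex.normSq (deriv F x))) w 1
          + (-2) * fderiv ℝ (fun x => Real.log ((1:ℝ) + Complex.normSq (F x))) w 1) :=
      hfd.mono fun w hw => hw 1
    rw [Filter.EventuallyEq.fderiv_eq hv]; erw [(h1a.add (h1b.const_mul (-2:ℝ))).fderiv]
    simp [smul_eq_mul]
  have eI : fderiv ℝ (fun w => fderiv ℝ u w Complex.I) z Complex.I
      = LIa Complex.I + (-2) * (LIb Complex.I) := by
    have hv : (fun w => fderiv ℝ u w Complex.I) =ᶠ[nhds z]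
        (fun w => fderiv ℝ (fun x => Real.log ((0:ℝ) + Complex.normSq (deriv F x))) w Complex.I
          + (-2) * fderiv ℝ (fun x => Real.log ((1:ℝ) + Complex.normSq (F x))) w Complex.I) :=
      hfd.mono fun w hw => hw Complex.I
    rw [Filter.EventuallyEq.fderiv_eq hv]; erw [(hIa.add (hIb.const_mul (-2:ℝ))).fderiv]
    simp [smul_eq_mul]
  have hexp : Real.exp (u z)
      = 4 * Complex.normSq (deriv F z) / (1 + Complex.normSq (F z)) ^ 2 := by
    rw [hu z, Complex.sq_norm, Complex.sq_norm]
    have h1 : (0:ℝ) < Complex.normSq (deriv F z) := Complex.normSq_pos.2 (hF' z hz)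
    have h2 : (0:ℝ) < 1 + Complex.normSq (F z) := by
      have := Complex.normSq_nonneg (F z); linarith
    exact Real.exp_log (by positivity)
  rw [e1, eI, hexp]
  have : L1a 1 + LIa Complex.I = 0 := by rw [hsa]; ring
  have h2 : L1b 1 + LIb Complex.I
      = 4 * Complex.normSq (deriv F z) / (1 + Complex.normSq (F z)) ^ 2 := by
    rw [hsb]; ring
  nlinarith [this, h2]
end

section
/- Let Ω ⊆ ℂ be open and let F : Ω → ℂ be holomorphic with F'(z) ≠ 0 and |F(z)| < 1 for all z ∈ Ω. Then the function u(z) = ln( 4 |F'(z)|² / (1 − |F(z)|²)² ) satisfies the elliptic Liouville equation Δu = 2 e^{u} on Ω, where Δ is the Laplacian on ℝ² identified with ℂ. -/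
open Complex

noncomputable def gfun (f : ℂ → ℂ) (p1 : ℝ → ℝ) (v z : ℂ) : ℝ :=
  p1 (Complex.normSq (f z)) * (2 * ((starRingEnd ℂ) (f z) * (deriv f z * v)).re)

lemma key (U : Set ℂ) (f : ℂ → ℂ) (hfa : AnalyticOnNhd ℂ f U)
    (p p1 p2 : ℝ → ℝ) (S : Set ℝ)
    (hmap : ∀ z ∈ U, Complex.normSq (f z) ∈ S)
    (hp1 : ∀ t ∈ S, HasDerivAt p (p1 t) t)
    (hp2 : ∀ t ∈ S, HasDerivAt p1 (p2 t) t)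
    (z : ℂ) (hz : z ∈ U) :
    DifferentiableAt ℝ (fun w => p (Complex.normSq (f w))) z
    ∧ (∀ v, fderiv ℝ (fun w => p (Complex.normSq (f w))) z v = gfun f p1 v z)
    ∧ (∀ v, DifferentiableAt ℝ (gfun f p1 v) z)
    ∧ fderiv ℝ (gfun f p1 1) z 1 + fderiv ℝ (gfun f p1 Complex.I) z Complex.I
        = 4 * p2 (Complex.normSq (f z)) * Complex.normSq (f z) * Complex.normSq (deriv f z)
          + 4 * p1 (Complex.normSq (f z)) * Complex.normSq (deriv f z) := by
  have hd1 : HasDerivAt f (deriv f z) z := (hfa z hz).differentiableAt.hasDerivAt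
  have hd2 : HasDerivAt (deriv f) (deriv (deriv f) z) z :=
    (hfa.deriv z hz).differentiableAt.hasDerivAt
  have hf_real : HasFDerivAt f
      (((1 : ℂ →L[ℂ] ℂ).smulRight (deriv f z)).restrictScalars ℝ) z :=
    hd1.hasFDerivAt.restrictScalars ℝ
  have hconj : HasFDerivAt (fun w => (starRingEnd ℂ) (f w))
      ((Complex.conjCLE : ℂ ≃L[ℝ] ℂ).toContinuousLinearMap.comp
        (((1 : ℂ →L[ℂ] ℂ).smulRight (deriv f z)).restrictScalars ℝ)) z :=
    (Complex.conjCLE.toContinuousLinearMap.hasFDerivAt).comp z hf_real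
  -- derivative of w ↦ normSq (f w)
  have hmulcc := hf_real.mul hconj
  have hre := (Complex.reCLM.hasFDerivAt).comp z hmulcc
  have hn : HasFDerivAt (fun w => Complex.normSq (f w))
      (Complex.reCLM.comp
        (f z • ((Complex.conjCLE : ℂ ≃L[ℝ] ℂ).toContinuousLinearMap.comp
            (((1 : ℂ →L[ℂ] ℂ).smulRight (deriv f z)).restrictScalars ℝ))
          + (starRingEnd ℂ) (f z) •
            (((1 : ℂ →L[ℂ] ℂ).smulRight (deriv f z)).restrictScalars ℝ))) z := by
    have : (fun w => ((fun w => f w * (starRingEnd ℂ) (f w)) w).re)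
        = fun w => Complex.normSq (f w) := by
      funext w; simp only [Complex.mul_conj, Complex.ofReal_re]
    rw [← this]
    exact hre
  have hφ : HasFDerivAt (fun w => p (Complex.normSq (f w)))
      (p1 (Complex.normSq (f z)) • _) z :=
    (hp1 _ (hmap z hz)).comp_hasFDerivAt z hn
  have hA : HasFDerivAt (fun w => p1 (Complex.normSq (f w))) _ z :=
    (hp2 _ (hmap z hz)).comp_hasFDerivAt z hn
  have hdf_real : HasFDerivAt (deriv f)
      (((1 : ℂ →L[ℂ] ℂ).smulRight (deriv (deriv f) z)).restrictScalars ℝ) z :=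
    hd2.hasFDerivAt.restrictScalars ℝ
  have hgd : ∀ v : ℂ, HasFDerivAt (gfun f p1 v) _ z := fun v =>
    hA.mul (((Complex.reCLM.hasFDerivAt).comp z
      (hconj.mul (hdf_real.mul_const v))).const_mul (2:ℝ))
  refine ⟨hφ.differentiableAt, ?_, ?_, ?_⟩
  · intro v
    rw [hφ.fderiv]
    simp only [gfun, ContinuousLinearMap.coe_smul', Pi.smul_apply,
      ContinuousLinearMap.coe_comp', Function.comp_apply,
      ContinuousLinearMap.add_apply, ContinuousLinearMap.coe_smul',
      ContinuousLinearMap.coe_restrictScalars', ContinuousLinearMap.smulRight_apply,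
      ContinuousLinearMap.one_apply, smul_eq_mul,
      ContinuousLinearEquiv.coe_coe, Complex.conjCLE_apply, Complex.reCLM_apply,
      map_mul, Pi.add_apply]
    simp only [Complex.add_re, Complex.mul_re, Complex.mul_im, Complex.conj_re,
      Complex.conj_im]
    ring
  · intro v
    exact (hgd v).differentiableAt
  · rw [(hgd 1).fderiv, (hgd Complex.I).fderiv]
    simp only [ContinuousLinearMap.add_apply, ContinuousLinearMap.coe_smul',
      Pi.smul_apply, ContinuousLinearMap.coe_comp', Function.comp_apply,
      ContinuousLinearMap.coe_restrictScalars', ContinuousLinearMap.smulRight_apply,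
      ContinuousLinearMap.one_apply, smul_eq_mul,
      ContinuousLinearEquiv.coe_coe, Complex.conjCLE_apply, Complex.reCLM_apply,
      map_mul, Pi.add_apply]
    simp only [Complex.add_re, Complex.mul_re, Complex.mul_im, Complex.conj_re,
      Complex.conj_im, Complex.normSq_apply, Complex.I_re, Complex.I_im,
      Complex.one_re, Complex.one_im]
    ring

/-- Liouville's formula in the elliptic setting, hyperbolic-metric sign: if `F` is
holomorphic on an open set `Ω ⊆ ℂ` with `F' ≠ 0` and `|F| < 1`, then
`u = ln( 4|F'|² / (1-|F|²)² )` satisfies `Δu = 2 e^u` on `Ω`,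
where the Laplacian is the sum of the second directional derivatives in the
directions `1` and `I` of `ℂ ≅ ℝ²`. -/
theorem liouville_elliptic_solution_pos
    (Ω : Set ℂ) (hΩ : IsOpen Ω)
    (F : ℂ → ℂ) (hF : DifferentiableOn ℂ F Ω)
    (hF' : ∀ z ∈ Ω, deriv F z ≠ 0)
    (hFlt : ∀ z ∈ Ω, ‖F z‖ < 1)
    (u : ℂ → ℝ)
    (hu : ∀ z, u z =
      Real.log (4 * ‖deriv F z‖ ^ 2 / (1 - ‖F z‖ ^ 2) ^ 2)) :
    ∀ z ∈ Ω,
      fderiv ℝ (fun w => fderiv ℝ u w 1) z 1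
        + fderiv ℝ (fun w => fderiv ℝ u w Complex.I) z Complex.I
      = 2 * Real.exp (u z) := by
  have hFa : AnalyticOnNhd ℂ F Ω := hF.analyticOnNhd hΩ
  have hF'a : AnalyticOnNhd ℂ (deriv F) Ω := hFa.deriv
  have hApos : ∀ w ∈ Ω, (0:ℝ) < Complex.normSq (deriv F w) := fun w hw =>
    Complex.normSq_pos.2 (hF' w hw)
  have hm1 : ∀ w ∈ Ω, Complex.normSq (F w) < 1 := by
    intro w hw
    have h := hFlt w hw
    have h0 := norm_nonneg (F w)
    rw [← Complex.sq_norm]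
    nlinarith
  have K1 := key Ω (deriv F) hF'a Real.log (fun t => t⁻¹) (fun t => -(t^2)⁻¹)
    (Set.Ioi 0) (fun w hw => hApos w hw)
    (fun t ht => Real.hasDerivAt_log (ne_of_gt ht))
    (fun t ht => hasDerivAt_inv (ne_of_gt ht))
  have K2 := key Ω F hFa (fun t => -2 * Real.log (1 - t)) (fun t => 2*(1-t)⁻¹)
    (fun t => 2*((1-t)^2)⁻¹) (Set.Iio 1) (fun w hw => hm1 w hw)
    (fun t ht => by
      have hne : (1:ℝ) - t ≠ 0 := sub_ne_zero.2 (ne_of_gt ht)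
      have h := ((Real.hasDerivAt_log hne).comp t
        ((hasDerivAt_id t).const_sub 1)).const_mul (-2 : ℝ)
      have h2 : (-2 : ℝ) * ((1-t)⁻¹ * -1) = 2*(1-t)⁻¹ := by ring
      rw [h2] at h
      exact h)
    (fun t ht => by
      have hne : (1:ℝ) - t ≠ 0 := sub_ne_zero.2 (ne_of_gt ht)
      have h := ((hasDerivAt_inv hne).comp t
        ((hasDerivAt_id t).const_sub 1)).const_mul (2 : ℝ)
      have h2 : (2 : ℝ) * (-((1-t)^2)⁻¹ * -1) = 2*((1-t)^2)⁻¹ := by ring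
      rw [h2] at h
      exact h)
  have hsum : ∀ w ∈ Ω, u w = Real.log 4 +
      (Real.log (Complex.normSq (deriv F w))
        + (-2 * Real.log (1 - Complex.normSq (F w)))) := by
    intro w hw
    have hA := hApos w hw
    have hB : (0:ℝ) < 1 - Complex.normSq (F w) := by linarith [hm1 w hw]
    rw [hu w, Complex.sq_norm, Complex.sq_norm,
      Real.log_div (by positivity) (by positivity),
      Real.log_mul (by norm_num) (ne_of_gt hA), Real.log_pow]
    push_cast
    ring
  intro z hz
  have hduv : ∀ v : ℂ, ∀ w ∈ Ω, fderiv ℝ u w v =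
      gfun (deriv F) (fun t => t⁻¹) v w + gfun F (fun t => 2*(1-t)⁻¹) v w := by
    intro v w hw
    have hev : u =ᶠ[nhds w] fun x => Real.log 4 +
        (Real.log (Complex.normSq (deriv F x))
          + (-2 * Real.log (1 - Complex.normSq (F x)))) :=
      Filter.eventually_of_mem (hΩ.mem_nhds hw) hsum
    rw [hev.fderiv_eq, fderiv_const_add, fderiv_fun_add (K1 w hw).1 (K2 w hw).1]
    rw [ContinuousLinearMap.add_apply, (K1 w hw).2.1 v, (K2 w hw).2.1 v]
  have Lap : ∀ v : ℂ, fderiv ℝ (fun w => fderiv ℝ u w v) z =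
      fderiv ℝ (gfun (deriv F) (fun t => t⁻¹) v) z
        + fderiv ℝ (gfun F (fun t => 2*(1-t)⁻¹) v) z := by
    intro v
    have hev : (fun w => fderiv ℝ u w v) =ᶠ[nhds z]
        fun w => gfun (deriv F) (fun t => t⁻¹) v w + gfun F (fun t => 2*(1-t)⁻¹) v w :=
      Filter.eventually_of_mem (hΩ.mem_nhds hz) (fun w hw => hduv v w hw)
    rw [hev.fderiv_eq, fderiv_fun_add ((K1 z hz).2.2.1 v) ((K2 z hz).2.2.1 v)]
  rw [Lap 1, Lap Complex.I]
  simp only [ContinuousLinearMap.add_apply]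
  have E1 := (K1 z hz).2.2.2
  have E2 := (K2 z hz).2.2.2
  have hA := hApos z hz
  have hB : (0:ℝ) < 1 - Complex.normSq (F z) := by linarith [hm1 z hz]
  have hrhs : 2 * Real.exp (u z) =
      2 * (4 * Complex.normSq (deriv F z) / (1 - Complex.normSq (F z)) ^ 2) := by
    rw [hu z, Real.exp_log (by rw [Complex.sq_norm, Complex.sq_norm]; positivity),
      Complex.sq_norm, Complex.sq_norm]
  rw [show fderiv ℝ (gfun (deriv F) (fun t => t⁻¹) 1) z 1
        + fderiv ℝ (gfun F (fun t => 2*(1-t)⁻¹) 1) z 1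
        + (fderiv ℝ (gfun (deriv F) (fun t => t⁻¹) Complex.I) z Complex.I
          + fderiv ℝ (gfun F (fun t => 2*(1-t)⁻¹) Complex.I) z Complex.I)
      = (fderiv ℝ (gfun (deriv F) (fun t => t⁻¹) 1) z 1
          + fderiv ℝ (gfun (deriv F) (fun t => t⁻¹) Complex.I) z Complex.I)
        + (fderiv ℝ (gfun F (fun t => 2*(1-t)⁻¹) 1) z 1
          + fderiv ℝ (gfun F (fun t => 2*(1-t)⁻¹) Complex.I) z Complex.I) by ring,
    E1, E2, hrhs]
  field_simp
  ring
end

section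
/- For λ > 0 and b > 0, the function u_b(x) = ln( 8b / ( λ (1 + b|x|²)² ) ) vanishes on the unit circle {x ∈ ℝ² : |x| = 1} if and only if 8b = λ(1+b)². Consequently, the number of b > 0 for which u_b solves the Dirichlet problem Δu + λ e^{u} = 0 on the open unit disk with u = 0 on the unit circle is: exactly two if 0 < λ < 2, exactly one if λ = 2, and zero if λ > 2. -/
noncomputable abbrev gelfandE := EuclideanSpace ℝ (Fin 2)

lemma gelfand_hasD (lam b : ℝ) (hlam : 0 < lam) (hb : 0 < b) (y : gelfandE) :
    HasFDerivAt (fun z : gelfandE => Real.log (8 * b / (lam * (1 + b * ‖z‖ ^ 2) ^ 2)))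
      ((-(2 * (1 + b * ‖y‖ ^ 2)⁻¹ * (2 * b))) • (innerSL ℝ y)) y := by
  have hfy : (0:ℝ) < 1 + b * ‖y‖ ^ 2 := by positivity
  have h1 : HasFDerivAt (fun z : gelfandE => 1 + b * ‖z‖ ^ 2) ((2 * b) • innerSL ℝ y) y := by
    have h := ((hasStrictFDerivAt_norm_sq y).hasFDerivAt.const_mul b).const_add 1
    refine h.congr_fderiv ?_
    ext v
    simp only [ContinuousLinearMap.coe_smul', Pi.smul_apply, smul_eq_mul]
    simp only [nsmul_eq_mul, Nat.cast_ofNat]; ring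
  have hlog : HasFDerivAt (fun z : gelfandE => Real.log (1 + b * ‖z‖ ^ 2))
      ((1 + b * ‖y‖ ^ 2)⁻¹ • ((2 * b) • innerSL ℝ y)) y := h1.log hfy.ne'
  have heq : (fun z : gelfandE => Real.log (8 * b / (lam * (1 + b * ‖z‖ ^ 2) ^ 2)))
      = fun z => Real.log (8 * b) - Real.log lam - 2 * Real.log (1 + b * ‖z‖ ^ 2) := by
    funext z
    have hz : (0:ℝ) < 1 + b * ‖z‖ ^ 2 := by positivity
    rw [Real.log_div (by positivity) (by positivity),
      Real.log_mul hlam.ne' (by positivity), Real.log_pow]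
    push_cast; ring
  rw [heq]
  have h2 := (hasFDerivAt_const (Real.log (8 * b) - Real.log lam) y).sub (hlog.const_mul 2)
  refine h2.congr_fderiv ?_
  ext v
  simp only [ContinuousLinearMap.coe_smul', Pi.smul_apply, ContinuousLinearMap.sub_apply,
    ContinuousLinearMap.zero_apply, smul_eq_mul]
  ring

lemma gelfand_fderiv_eval (lam b : ℝ) (hlam : 0 < lam) (hb : 0 < b) (y : gelfandE) (i : Fin 2) :
    fderiv ℝ (fun z : gelfandE => Real.log (8 * b / (lam * (1 + b * ‖z‖ ^ 2) ^ 2))) y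
      (EuclideanSpace.single i 1)
    = -(4 * b) * ((1 + b * ‖y‖ ^ 2)⁻¹ * y i) := by
  rw [(gelfand_hasD lam b hlam hb y).fderiv]
  have : (innerSL ℝ y) (EuclideanSpace.single i 1) = y i := by
    simp [EuclideanSpace.inner_single_right]
  simp only [ContinuousLinearMap.coe_smul', Pi.smul_apply, smul_eq_mul, this]
  ring

lemma gelfand_snd (lam b : ℝ) (hlam : 0 < lam) (hb : 0 < b) (x : gelfandE) (i : Fin 2) :
    fderiv ℝ (fun y : gelfandE => fderiv ℝ
        (fun z : gelfandE => Real.log (8 * b / (lam * (1 + b * ‖z‖ ^ 2) ^ 2))) y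
        (EuclideanSpace.single i 1)) x (EuclideanSpace.single i 1)
    = -(4 * b) * ((1 + b * ‖x‖ ^ 2)⁻¹ + x i * (-(((1 + b * ‖x‖ ^ 2) ^ 2)⁻¹) * (2 * b * x i))) := by
  have hfun : (fun y : gelfandE => fderiv ℝ
        (fun z : gelfandE => Real.log (8 * b / (lam * (1 + b * ‖z‖ ^ 2) ^ 2))) y
        (EuclideanSpace.single i 1))
      = fun y : gelfandE => -(4 * b) * ((1 + b * ‖y‖ ^ 2)⁻¹ * y i) :=
    funext fun y => gelfand_fderiv_eval lam b hlam hb y i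
  rw [hfun]
  have hfx : (0:ℝ) < 1 + b * ‖x‖ ^ 2 := by positivity
  have h1 : HasFDerivAt (fun z : gelfandE => 1 + b * ‖z‖ ^ 2) ((2 * b) • innerSL ℝ x) x := by
    have h := ((hasStrictFDerivAt_norm_sq x).hasFDerivAt.const_mul b).const_add 1
    refine h.congr_fderiv ?_
    ext v
    simp only [ContinuousLinearMap.coe_smul', Pi.smul_apply, smul_eq_mul]
    simp only [nsmul_eq_mul, Nat.cast_ofNat]; ring
  have hinv : HasFDerivAt (fun z : gelfandE => (1 + b * ‖z‖ ^ 2)⁻¹)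
      ((-(( (1 + b * ‖x‖ ^ 2) ^ 2)⁻¹)) • ((2 * b) • innerSL ℝ x)) x :=
    (hasDerivAt_inv hfx.ne').comp_hasFDerivAt x h1
  have hproj : HasFDerivAt (fun z : gelfandE => z i)
      (EuclideanSpace.proj i : gelfandE →L[ℝ] ℝ) x :=
    (EuclideanSpace.proj i : gelfandE →L[ℝ] ℝ).hasFDerivAt
  have hmul := hinv.mul hproj
  have hfull := hmul.const_mul (-(4 * b))
  rw [show fderiv ℝ (fun y : gelfandE => -(4 * b) * ((1 + b * ‖y‖ ^ 2)⁻¹ * y i)) x = _ from hfull.fderiv]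
  have hip : (innerSL ℝ x) (EuclideanSpace.single i 1) = x i := by
    simp [EuclideanSpace.inner_single_right]
  simp only [ContinuousLinearMap.coe_smul', Pi.smul_apply, ContinuousLinearMap.add_apply,
    smul_eq_mul, hip]
  have hp : (EuclideanSpace.proj i : gelfandE →L[ℝ] ℝ) (EuclideanSpace.single i 1) = 1 := by
    show (EuclideanSpace.single i (1:ℝ) : gelfandE) i = 1
    simp
  rw [hp]
  ring

lemma gelfand_interior (lam b : ℝ) (hlam : 0 < lam) (hb : 0 < b) (x : gelfandE) :
    (∑ i : Fin 2,
      fderiv ℝ (fun y : gelfandE => fderiv ℝ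
          (fun z : gelfandE => Real.log (8 * b / (lam * (1 + b * ‖z‖ ^ 2) ^ 2))) y
          (EuclideanSpace.single i 1)) x (EuclideanSpace.single i 1))
      + lam * Real.exp (Real.log (8 * b / (lam * (1 + b * ‖x‖ ^ 2) ^ 2))) = 0 := by
  have hfx : (0:ℝ) < 1 + b * ‖x‖ ^ 2 := by positivity
  have hexp : Real.exp (Real.log (8 * b / (lam * (1 + b * ‖x‖ ^ 2) ^ 2)))
      = 8 * b / (lam * (1 + b * ‖x‖ ^ 2) ^ 2) := Real.exp_log (by positivity)
  have hnorm : x 0 * x 0 + x 1 * x 1 = ‖x‖ ^ 2 := by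
    rw [← real_inner_self_eq_norm_sq]
    simp only [PiLp.inner_apply, Fin.sum_univ_two, RCLike.inner_apply, conj_trivial]
  rw [hexp, Fin.sum_univ_two, gelfand_snd lam b hlam hb x 0, gelfand_snd lam b hlam hb x 1]
  have h2 : (1 + b * ‖x‖ ^ 2) ≠ 0 := hfx.ne'
  rw [← hnorm] at h2 ⊢
  field_simp
  ring



/-- The Gelfand problem on the unit disk: for `λ, b > 0`, the radial function
`u_b(x) = ln( 8b / (λ (1+b|x|²)²) )` vanishes on the unit circle iff
`8b = λ(1+b)²`; consequently the number of `b > 0` for which `u_b` solves the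
Dirichlet problem `Δu + λ e^u = 0` in the open unit disk, `u = 0` on the unit
circle, is two for `0 < λ < 2`, one for `λ = 2` and zero for `λ > 2`.
The Laplacian is the sum of second directional derivatives along the coordinate
directions of `ℝ² = EuclideanSpace ℝ (Fin 2)`. -/
theorem gelfand_dirichlet_unit_disk
    (lam : ℝ) (hlam : 0 < lam)
    (u : ℝ → EuclideanSpace ℝ (Fin 2) → ℝ)
    (hu : ∀ b x, u b x = Real.log (8 * b / (lam * (1 + b * ‖x‖ ^ 2) ^ 2)))
    (S : Set ℝ)
    (hS : S = {b : ℝ | 0 < b ∧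
      (∀ x : EuclideanSpace ℝ (Fin 2), ‖x‖ < 1 →
        (∑ i : Fin 2,
          fderiv ℝ (fun y => fderiv ℝ (u b) y (EuclideanSpace.single i 1)) x
            (EuclideanSpace.single i 1))
          + lam * Real.exp (u b x) = 0) ∧
      (∀ x : EuclideanSpace ℝ (Fin 2), ‖x‖ = 1 → u b x = 0)}) :
    (∀ b : ℝ, 0 < b →
      ((∀ x : EuclideanSpace ℝ (Fin 2), ‖x‖ = 1 → u b x = 0) ↔
        8 * b = lam * (1 + b) ^ 2)) ∧
    (lam < 2 → S.encard = 2) ∧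
    (lam = 2 → S.encard = 1) ∧
    (2 < lam → S.encard = 0) := by
  -- boundary characterization
  have hbd : ∀ b : ℝ, 0 < b →
      ((∀ x : EuclideanSpace ℝ (Fin 2), ‖x‖ = 1 → u b x = 0) ↔
        8 * b = lam * (1 + b) ^ 2) := by
    intro b hb
    constructor
    · intro h
      have hx1 : ‖(EuclideanSpace.single 0 (1:ℝ) : EuclideanSpace ℝ (Fin 2))‖ = 1 := by simp
      have h0 := h _ hx1
      rw [hu, hx1] at h0
      have hpos : (0:ℝ) < 8 * b / (lam * (1 + b * 1 ^ 2) ^ 2) := by positivity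
      have hA : 8 * b / (lam * (1 + b * 1 ^ 2) ^ 2) = 1 := by
        rw [← Real.exp_log hpos, h0, Real.exp_zero]
      have hden : lam * (1 + b * 1 ^ 2) ^ 2 ≠ 0 := by positivity
      field_simp at hA
      nlinarith [hA]
    · intro heq x hx
      rw [hu, hx]
      have hden : lam * (1 + b * 1 ^ 2) ^ 2 ≠ 0 := by positivity
      have hA : 8 * b / (lam * (1 + b * (1:ℝ) ^ 2) ^ 2) = 1 := by
        rw [div_eq_one_iff_eq hden]
        nlinarith [heq]
      rw [hA, Real.log_one]
  -- simplified description of S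
  have hSeq : S = {b : ℝ | 0 < b ∧ 8 * b = lam * (1 + b) ^ 2} := by
    rw [hS]
    ext b
    simp only [Set.mem_setOf_eq]
    constructor
    · rintro ⟨hb, _, hbdry⟩
      exact ⟨hb, (hbd b hb).1 hbdry⟩
    · rintro ⟨hb, heq⟩
      refine ⟨hb, ?_, (hbd b hb).2 heq⟩
      intro x _
      have hub : u b = fun z : EuclideanSpace ℝ (Fin 2) =>
          Real.log (8 * b / (lam * (1 + b * ‖z‖ ^ 2) ^ 2)) := funext (hu b)
      rw [hub]
      exact gelfand_interior lam b hlam hb x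
  refine ⟨hbd, ?_, ?_, ?_⟩
  · -- lam < 2 : two solutions
    intro h2
    set s : ℝ := Real.sqrt (8 * (2 - lam)) with hsdef
    have hs2 : s ^ 2 = 8 * (2 - lam) := Real.sq_sqrt (by linarith)
    have hs0 : 0 < s := Real.sqrt_pos.2 (by linarith)
    have hslt : s < 4 - lam := by
      nlinarith [hs2, hs0, sq_nonneg (s - (4 - lam))]
    set r₁ : ℝ := (4 - lam - s) / lam with hr₁
    set r₂ : ℝ := (4 - lam + s) / lam with hr₂
    have e1 : lam * r₁ = 4 - lam - s := by rw [hr₁]; field_simp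
    have e2 : lam * r₂ = 4 - lam + s := by rw [hr₂]; field_simp
    have hident : ∀ b : ℝ, lam ^ 2 * ((b - r₁) * (b - r₂))
        = lam * (lam * (1 + b) ^ 2 - 8 * b) := by
      intro b
      linear_combination (-(lam * b - lam * r₂)) * e1 +
        (-(lam * b - (4 - lam - s))) * e2 - hs2
    have key : ∀ b : ℝ, 8 * b = lam * (1 + b) ^ 2 ↔ (b = r₁ ∨ b = r₂) := by
      intro b
      constructor
      · intro he
        have h0 : lam ^ 2 * ((b - r₁) * (b - r₂)) = 0 := by
          rw [hident b]; nlinarith [he]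
        have h1 : (b - r₁) * (b - r₂) = 0 := by
          have hl2 : lam ^ 2 ≠ 0 := by positivity
          exact (mul_eq_zero.1 h0).resolve_left hl2
        rcases mul_eq_zero.1 h1 with h | h
        · exact Or.inl (by linarith [sub_eq_zero.1 h])
        · exact Or.inr (by linarith [sub_eq_zero.1 h])
      · rintro (rfl | rfl)
        · have := hident r₁
          nlinarith [this]
        · have := hident r₂
          nlinarith [this]
    have hr₁pos : 0 < r₁ := div_pos (by linarith) hlam
    have hr₂pos : 0 < r₂ := div_pos (by linarith) hlam
    have hne : r₁ ≠ r₂ := by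
      intro h
      rw [hr₁, hr₂, div_eq_div_iff hlam.ne' hlam.ne'] at h
      nlinarith [h, hs0, hlam]
    have : S = {r₁, r₂} := by
      rw [hSeq]
      ext b
      simp only [Set.mem_setOf_eq, Set.mem_insert_iff, Set.mem_singleton_iff, key b]
      constructor
      · rintro ⟨_, h⟩; exact h
      · rintro (rfl | rfl)
        · exact ⟨hr₁pos, Or.inl rfl⟩
        · exact ⟨hr₂pos, Or.inr rfl⟩
    rw [this, Set.encard_pair hne]
  · -- lam = 2 : one solution
    rintro rfl
    have : S = {1} := by
      rw [hSeq]
      ext b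
      simp only [Set.mem_setOf_eq, Set.mem_singleton_iff]
      constructor
      · rintro ⟨hb, he⟩
        nlinarith [he, sq_nonneg (b - 1)]
      · rintro rfl
        norm_num
    rw [this, Set.encard_singleton]
  · -- lam > 2 : no solution
    intro h2
    have : S = ∅ := by
      rw [hSeq]
      ext b
      simp only [Set.mem_setOf_eq, Set.mem_empty_iff_false, iff_false, not_and]
      intro hb he
      nlinarith [he, sq_nonneg (1 - b), hb]
    rw [this, Set.encard_empty]
end

section
/- Let I and J be open intervals in ℝ, and let f : I → ℝ and g : J → ℝ be twice continuously differentiable functions such that f'(x)·g'(y) < 0 and f(x) + g(y) ≠ 0 for all (x,y) ∈ I × J. Then the function u(x,y) = ln( −2 f'(x) g'(y) / (f(x) + g(y))² ) satisfies ∂²u/∂x∂y = −e^{u} at every point of I × J. -/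
/-- Liouville's formula with the opposite sign: if `f'(x)·g'(y) < 0` and
`f(x)+g(y) ≠ 0` on a product of open intervals, then
`u(x,y) = ln( -2 f'(x) g'(y) / (f(x)+g(y))² )` satisfies `u_{xy} = -e^u`. -/
theorem liouville_hyperbolic_solution_neg
    (I J : Set ℝ) (hI : IsOpen I) (hJ : IsOpen J)
    (hIint : I.OrdConnected) (hJint : J.OrdConnected)
    (f g : ℝ → ℝ)
    (hf : ContDiffOn ℝ 2 f I) (hg : ContDiffOn ℝ 2 g J)
    (hneg : ∀ x ∈ I, ∀ y ∈ J, deriv f x * deriv g y < 0)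
    (hne : ∀ x ∈ I, ∀ y ∈ J, f x + g y ≠ 0)
    (u : ℝ → ℝ → ℝ)
    (hu : ∀ x y, u x y =
      Real.log (-2 * deriv f x * deriv g y / (f x + g y) ^ 2)) :
    ∀ x ∈ I, ∀ y ∈ J,
      deriv (fun x' => deriv (fun y' => u x' y') y) x = -Real.exp (u x y) := by
  intro x hx y hy
  have hfd : ∀ x' ∈ I, DifferentiableAt ℝ f x' := fun x' hx' =>
    (hf.differentiableOn (by norm_num)).differentiableAt (hI.mem_nhds hx')
  have hgd : ∀ y' ∈ J, DifferentiableAt ℝ g y' := fun y' hy' =>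
    (hg.differentiableOn (by norm_num)).differentiableAt (hJ.mem_nhds hy')
  have hcd1 : ContDiffOn ℝ 1 (deriv g) J := hg.deriv_of_isOpen hJ (by norm_num)
  have hgd2 : DifferentiableAt ℝ (deriv g) y :=
    (hcd1.differentiableOn (by norm_num)).differentiableAt (hJ.mem_nhds hy)
  have hf' : ∀ x' ∈ I, deriv f x' ≠ 0 := fun x' hx' =>
    (mul_ne_zero_iff.mp (hneg x' hx' y hy).ne).1
  have hg' : ∀ y' ∈ J, deriv g y' ≠ 0 := fun y' hy' =>
    (mul_ne_zero_iff.mp (hneg x hx y' hy').ne).2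
  -- Step A: logarithmic splitting of u on I × J
  have hA : ∀ x' ∈ I, ∀ y' ∈ J, u x' y' =
      Real.log (-2) + Real.log (deriv f x') + Real.log (deriv g y')
        - 2 * Real.log (f x' + g y') := by
    intro x' hx' y' hy'
    rw [hu, Real.log_div (mul_ne_zero (mul_ne_zero (by norm_num) (hf' x' hx'))
        (hg' y' hy')) (pow_ne_zero 2 (hne x' hx' y' hy')),
      Real.log_mul (mul_ne_zero (by norm_num) (hf' x' hx')) (hg' y' hy'),
      Real.log_mul (by norm_num) (hf' x' hx'), Real.log_pow]
    push_cast
    ring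
  set K := deriv (deriv g) y / deriv g y with hK
  -- Step B: inner derivative in y
  have hB : ∀ x' ∈ I, deriv (fun y' => u x' y') y
      = K - 2 * (deriv g y / (f x' + g y)) := by
    intro x' hx'
    have hlg : HasDerivAt (fun y' => Real.log (deriv g y')) K y :=
      hgd2.hasDerivAt.log (hg' y hy)
    have hl2 : HasDerivAt (fun y' => Real.log (f x' + g y'))
        (deriv g y / (f x' + g y)) y := by
      have := ((hasDerivAt_const y (f x')).add (hgd y hy).hasDerivAt).log
        (hne x' hx' y hy)
      simpa using this
    have hG : HasDerivAt (fun y' => Real.log (-2) + Real.log (deriv f x')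
        + Real.log (deriv g y') - 2 * Real.log (f x' + g y'))
        (K - 2 * (deriv g y / (f x' + g y))) y := by
      exact (hlg.const_add (Real.log (-2) + Real.log (deriv f x'))).sub
        (hl2.const_mul 2)
    have heq : (fun y' => u x' y') =ᶠ[nhds y]
        (fun y' => Real.log (-2) + Real.log (deriv f x')
          + Real.log (deriv g y') - 2 * Real.log (f x' + g y')) := by
      filter_upwards [hJ.mem_nhds hy] with y' hy' using hA x' hx' y' hy'
    rw [heq.deriv_eq, hG.deriv]
  -- Step C: outer derivative in x
  have heqx : (fun x' => deriv (fun y' => u x' y') y)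
      =ᶠ[nhds x] (fun x' => K - 2 * (deriv g y / (f x' + g y))) := by
    filter_upwards [hI.mem_nhds hx] with x' hx' using hB x' hx'
  rw [heqx.deriv_eq]
  have hfx : HasDerivAt (fun x' => f x' + g y) (deriv f x) x := by
    simpa using (hfd x hx).hasDerivAt.add_const (g y)
  have hinv : HasDerivAt (fun x' => (f x' + g y)⁻¹)
      (-(deriv f x) / (f x + g y) ^ 2) x := hfx.inv (hne x hx y hy)
  have hmain : HasDerivAt (fun x' => K - 2 * (deriv g y / (f x' + g y)))
      (2 * deriv f x * deriv g y / (f x + g y) ^ 2) x := by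
    have h2 := ((hinv.const_mul (deriv g y)).const_mul 2).const_sub K
    convert h2 using 1
    · rfl
    · rfl
    · funext x'; ring
    · ring
  rw [hmain.deriv]
  have hpos : 0 < -2 * deriv f x * deriv g y / (f x + g y) ^ 2 := by
    apply div_pos
    · nlinarith [hneg x hx y hy]
    · exact pow_two_pos_of_ne_zero (hne x hx y hy)
  rw [hu, Real.exp_log hpos]
  ring
end
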